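/- Let α be a real number with 0 < α < π, set k₊ = −(2π−α)/α and k₋ = −α/(2π−α), and let k be a real number with k₊ ≤ k ≤ k₋. Then for every real η with 0 < η ≤ 1, F(η,α) ≠ 2k/(k² + 1). -/
import Mathlib


open Real

/-- The dispersion function of the transmission problem at a corner of opening `α`. -/
noncomputable def F (η α : ℝ) : ℝ :=
  Real.sin (α * η) * Real.sin ((2 * Real.pi - α) * η) /
    (Real.cos (α * η) * Real.cos ((2 * Real.pi - α) * η) - 1)

theorem dispersion_unsolvable_inside_critical
    (α : ℝ) (hα0 : 0 < α) (hαπ : α < Real.pi)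
    (k : ℝ) (hkp : -(2 * Real.pi - α) / α ≤ k) (hkm : k ≤ -α / (2 * Real.pi - α))
    (η : ℝ) (hη0 : 0 < η) (hη1 : η ≤ 1) :
    F η α ≠ 2 * k / (k ^ 2 + 1) := by
  have hπ : 0 < Real.pi := Real.pi_pos
  have hβpos : 0 < 2 * Real.pi - α := by linarith
  set p : ℝ := Real.pi * η with hpdef
  set q : ℝ := (Real.pi - α) * η with hqdef
  have hp0 : 0 < p := mul_pos hπ hη0
  have hppi : p ≤ Real.pi := by
    have : Real.pi * η ≤ Real.pi * 1 := by
      exact mul_le_mul_of_nonneg_left hη1 hπ.le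
    simpa [hpdef] using this
  have hq0 : 0 < q := mul_pos (by linarith) hη0
  have hqpi : q < Real.pi := by
    have h1 : (Real.pi - α) * η ≤ (Real.pi - α) * 1 :=
      mul_le_mul_of_nonneg_left hη1 (by linarith)
    have : (Real.pi - α) * 1 < Real.pi := by nlinarith
    linarith [h1]
  set A : ℝ := Real.sin p with hAdef
  set B : ℝ := Real.sin q with hBdef
  have hu0 : 0 ≤ A := Real.sin_nonneg_of_nonneg_of_le_pi hp0.le hppi
  have hv0 : 0 < B := Real.sin_pos_of_pos_of_lt_pi hq0 hqpi
  have hsum : 0 < A ^ 2 + B ^ 2 := by nlinarith [sq_nonneg A]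
  -- key concavity inequality : (π-α)/π * A < B
  have hlam0 : 0 < (Real.pi - α) / Real.pi := div_pos (by linarith) hπ
  have hlam1 : (Real.pi - α) / Real.pi < 1 := by
    rw [div_lt_one hπ]; linarith
  have key : (Real.pi - α) / Real.pi * A < B := by
    have hc := strictConcaveOn_sin_Icc.2 (Set.mem_Icc.2 ⟨le_rfl, hπ.le⟩)
      (Set.mem_Icc.2 ⟨hp0.le, hppi⟩) hp0.ne
      (show (0:ℝ) < 1 - (Real.pi - α) / Real.pi by linarith) hlam0 (by ring)
    have hq' : (Real.pi - α) / Real.pi * p = q := by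
      field_simp [hpdef, hqdef]
      ring
    simpa [hq', hAdef, hBdef] using hc
  have hlt : (Real.pi - α) * A < Real.pi * B := by
    rw [div_mul_eq_mul_div, div_lt_iff₀ hπ] at key
    linarith
  have hsq : ((Real.pi - α) * A) ^ 2 < (Real.pi * B) ^ 2 := by
    have h0 : 0 ≤ (Real.pi - α) * A := mul_nonneg (by linarith) hu0
    exact pow_lt_pow_left₀ hlt h0 two_ne_zero
  -- rewrite F
  have h1 : Real.sin p ^ 2 + Real.cos p ^ 2 = 1 := Real.sin_sq_add_cos_sq p
  have h2 : Real.sin q ^ 2 + Real.cos q ^ 2 = 1 := Real.sin_sq_add_cos_sq q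
  have ha : α * η = p - q := by rw [hpdef, hqdef]; ring
  have hb : (2 * Real.pi - α) * η = p + q := by rw [hpdef, hqdef]; ring
  have hnum : Real.sin (α * η) * Real.sin ((2 * Real.pi - α) * η) = A ^ 2 - B ^ 2 := by
    rw [ha, hb, Real.sin_add, Real.sin_sub, hAdef, hBdef]
    linear_combination Real.sin p ^ 2 * h2 - Real.sin q ^ 2 * h1
  have hden : Real.cos (α * η) * Real.cos ((2 * Real.pi - α) * η) - 1 = -(A ^ 2 + B ^ 2) := by
    rw [ha, hb, Real.cos_add, Real.cos_sub, hAdef, hBdef]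
    linear_combination Real.cos q ^ 2 * h1 + (1 - Real.sin p ^ 2) * h2
  have hF : F η α = (B ^ 2 - A ^ 2) / (A ^ 2 + B ^ 2) := by
    unfold F
    rw [hnum, hden, div_neg, ← neg_div, neg_sub]
  -- F > c where c = -(2αβ)/(α²+β²)
  have hdenpos : 0 < α ^ 2 + (2 * Real.pi - α) ^ 2 :=
    add_pos (pow_pos hα0 2) (pow_pos hβpos 2)
  have hc : -(2 * α * (2 * Real.pi - α)) / (α ^ 2 + (2 * Real.pi - α) ^ 2)
      < (B ^ 2 - A ^ 2) / (A ^ 2 + B ^ 2) := by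
    rw [div_lt_div_iff₀ hdenpos hsum]
    linarith [hsq]
  -- 2k/(k²+1) ≤ c
  have hk1 : 0 ≤ α * k + (2 * Real.pi - α) := by
    have := (div_le_iff₀ hα0).mp hkp
    linarith
  have hk2 : (2 * Real.pi - α) * k + α ≤ 0 := by
    have := (le_div_iff₀ hβpos).mp hkm
    linarith
  have hg : 2 * k / (k ^ 2 + 1)
      ≤ -(2 * α * (2 * Real.pi - α)) / (α ^ 2 + (2 * Real.pi - α) ^ 2) := by
    rw [div_le_div_iff₀ (by positivity) hdenpos]
    have hprod := mul_nonneg hk1 (neg_nonneg.2 hk2)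
    linarith [hprod]
  have : 2 * k / (k ^ 2 + 1) < F η α := by
    rw [hF]; exact lt_of_le_of_lt hg hc
  exact this.ne'
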